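/- Let S ⊆ ℤ^d be a finite set that is not contained in any line (its affine span has dimension at least 2), and let s₀ ∈ S. Then there exists an AP-free finite colouring of ℝ^d containing no almost-monochromatic positive homothetic copy of (S, s₀). -/

import Mathlib

noncomputable def psi (x : ℝ) : Fin 2 := if Even (Int.log 2 |x|) then 0 else 1

lemma psi_neg (x : ℝ) : psi (-x) = psi x := by simp [psi]

lemma psi_log_eq (N : ℕ) (x : ℝ) (h1 : (2:ℝ)^N ≤ x) (h2 : x < (2:ℝ)^(N+1)) :
    Int.log 2 x = N := by
  have hx : (0:ℝ) < x := lt_of_lt_of_le (by positivity) h1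
  have h1' : ((2:ℕ):ℝ) ^ (N:ℤ) ≤ x := by push_cast [zpow_natCast]; exact h1
  have h2' : x < ((2:ℕ):ℝ) ^ ((N:ℤ)+1) := by
    rw [show ((N:ℤ)+1) = ((N+1:ℕ):ℤ) by push_cast; ring, zpow_natCast]
    push_cast
    exact h2
  have a1 := (Int.zpow_le_iff_le_log (by norm_num) hx).mp h1'
  have a2 := (Int.lt_zpow_iff_log_lt (by norm_num) hx).mp h2'
  omega

lemma hit (b r L M : ℝ) (hr : 0 < r) (hL : b ≤ L) (hM : r ≤ M) :
    ∃ n : ℕ, L ≤ b + n * r ∧ b + n * r < L + M := by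
  have h0 : (0:ℤ) ≤ ⌈(L - b)/r⌉ := Int.ceil_nonneg (div_nonneg (by linarith) hr.le)
  have hcast : (((⌈(L - b)/r⌉).toNat : ℕ) : ℝ) = ((⌈(L - b)/r⌉ : ℤ) : ℝ) := by
    exact_mod_cast congrArg (fun z : ℤ => (z : ℝ)) (Int.toNat_of_nonneg h0)
  refine ⟨(⌈(L - b)/r⌉).toNat, ?_, ?_⟩
  · have h1 : ((L - b)/r) ≤ ((⌈(L - b)/r⌉).toNat : ℝ) := by
      rw [hcast]; exact Int.le_ceil _
    have := (div_le_iff₀ hr).mp h1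
    linarith
  · have hc : ((⌈(L - b)/r⌉).toNat : ℝ) < (L - b)/r + 1 := by
      rw [hcast]; exact Int.ceil_lt_add_one _
    have := (lt_div_iff₀ hr).mp (by linarith : ((⌈(L - b)/r⌉).toNat : ℝ) - 1 < (L - b)/r)
    nlinarith

lemma psi_ap_pos (b r : ℝ) (hr : 0 < r) :
    ∃ n m : ℕ, psi (b + n * r) ≠ psi (b + m * r) := by
  obtain ⟨N, hN⟩ : ∃ N : ℕ, max b r < 2 ^ N := pow_unbounded_of_one_lt _ (by norm_num)
  have hb : b ≤ (2:ℝ)^N := le_of_lt (lt_of_le_of_lt (le_max_left _ _) hN)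
  have hrN : r ≤ (2:ℝ)^N := le_of_lt (lt_of_le_of_lt (le_max_right _ _) hN)
  obtain ⟨n, hn1, hn2⟩ := hit b r ((2:ℝ)^N) ((2:ℝ)^N) hr hb hrN
  obtain ⟨m, hm1, hm2⟩ := hit b r ((2:ℝ)^(N+1)) ((2:ℝ)^(N+1)) hr
      (hb.trans (by apply pow_le_pow_right₀ <;> norm_num)) (hrN.trans (by apply pow_le_pow_right₀ <;> norm_num))
  have hxpos : (0:ℝ) < b + n * r := lt_of_lt_of_le (by positivity) hn1
  have hypos : (0:ℝ) < b + m * r := lt_of_lt_of_le (by positivity) hm1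
  have hlx : Int.log 2 |b + n * r| = N := by
    rw [abs_of_pos hxpos]
    exact psi_log_eq N _ hn1 (by rw [pow_succ]; linarith)
  have hly : Int.log 2 |b + m * r| = (N+1 : ℕ) := by
    rw [abs_of_pos hypos]
    exact psi_log_eq (N+1) _ hm1 (by rw [pow_succ (2:ℝ) (N+1)]; linarith)
  refine ⟨n, m, ?_⟩
  unfold psi
  rw [hlx, hly]
  have this : ¬ (Even ((N:ℤ)) ↔ Even (((N+1:ℕ):ℤ))) := by
    push_cast [Int.even_add_one]; tauto
  split_ifs with h1 h2 h2
  · exact absurd (iff_of_true h1 h2) this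
  · simp
  · simp
  · exact absurd (iff_of_false h1 h2) this

lemma psi_ap (b r : ℝ) (hr : r ≠ 0) : ∃ n m : ℕ, psi (b + n * r) ≠ psi (b + m * r) := by
  rcases hr.lt_or_gt with hneg | hpos
  · obtain ⟨n, m, hnm⟩ := psi_ap_pos (-b) (-r) (by linarith)
    refine ⟨n, m, ?_⟩
    rw [← psi_neg (b + n*r), ← psi_neg (b + m*r),
        show -(b + (n:ℝ)*r) = -b + n * (-r) by ring, show -(b + (m:ℝ)*r) = -b + m * (-r) by ring]
    exact hnm
  · exact psi_ap_pos b r hpos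


noncomputable def Lf {d : ℕ} (w : EuclideanSpace ℝ (Fin d)) (j : Fin d)
    (x : EuclideanSpace ℝ (Fin d)) : ℝ :=
  x j - w j * (∑ i, w i * x i) / (∑ i, w i * w i)

lemma Lf_affine {d : ℕ} (w : EuclideanSpace ℝ (Fin d)) (j : Fin d)
    (a x : EuclideanSpace ℝ (Fin d)) (t : ℝ) :
    Lf w j (a + t • x) = Lf w j a + t * Lf w j x := by
  unfold Lf
  have hs : ∑ i, w i * (a + t • x) i = (∑ i, w i * a i) + t * ∑ i, w i * x i := by
    rw [Finset.mul_sum, ← Finset.sum_add_distrib]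
    refine Finset.sum_congr rfl fun i _ => ?_
    simp only [PiLp.add_apply, PiLp.smul_apply, smul_eq_mul]
    ring
  rw [hs]
  simp only [PiLp.add_apply, PiLp.smul_apply, smul_eq_mul]
  ring

lemma Lf_self {d : ℕ} (w : EuclideanSpace ℝ (Fin d)) (hQ : (∑ i, w i * w i) ≠ 0)
    (j : Fin d) : Lf w j w = 0 := by
  unfold Lf
  rw [mul_div_assoc, div_self hQ, mul_one, sub_self]

lemma Lf_zero {d : ℕ} (w v : EuclideanSpace ℝ (Fin d))
    (h : ∀ j, Lf w j v = 0) :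
    v = ((∑ i, w i * v i) / (∑ i, w i * w i)) • w := by
  ext j
  have hj := h j
  unfold Lf at hj
  show v j = ((∑ i, w i * v i) / (∑ i, w i * w i)) • w j
  rw [smul_eq_mul]
  linear_combination hj



/-- A colouring of `ℝ^d` is AP-free if no infinite arithmetic progression
`{a + n • v : n ∈ ℕ}` with `v ≠ 0` is monochromatic. -/
def APFree {d k : ℕ} (φ : EuclideanSpace ℝ (Fin d) → Fin k) : Prop :=
  ¬ ∃ (a v : EuclideanSpace ℝ (Fin d)) (c : Fin k), v ≠ 0 ∧
      ∀ n : ℕ, φ (a + (n : ℝ) • v) = c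

/-- The pair `(S, s₀)` is almost-monochromatic under `φ`. -/
def AlmostMono {X : Type*} {k : ℕ} (φ : X → Fin k) (S : Set X) (s₀ : X) : Prop :=
  (∃ c, ∀ x ∈ S \ {s₀}, φ x = c) ∧ ¬ ∃ c, ∀ x ∈ S, φ x = c

/-- If the finite set `S ⊆ ℤ^d` is not contained in any line and
`s₀ ∈ S`, then there is an AP-free finite colouring of `ℝ^d` with no
almost-monochromatic positive homothet of `(S, s₀)`. -/
theorem no_am_positive_homothet (d : ℕ) (S : Set (EuclideanSpace ℝ (Fin d)))
    (hfin : S.Finite) (hZ : ∀ p ∈ S, ∀ i, ∃ z : ℤ, p i = (z : ℝ))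
    (hnoline : ¬ ∃ a v : EuclideanSpace ℝ (Fin d), ∀ p ∈ S, ∃ t : ℝ, p = a + t • v)
    (s₀ : EuclideanSpace ℝ (Fin d)) (hs₀ : s₀ ∈ S) :
    ∃ (k : ℕ) (φ : EuclideanSpace ℝ (Fin d) → Fin k), APFree φ ∧
      ¬ ∃ (c : EuclideanSpace ℝ (Fin d)) (l : ℝ), 0 < l ∧
        AlmostMono φ ((fun s => c + l • s) '' S) (c + l • s₀) := by
  classical
  -- Extract two "independent" directions inside S.
  have hpair : ∃ s₁ ∈ S, ∃ s₂ ∈ S, (s₂ - s₀ ≠ 0) ∧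
      ∀ t : ℝ, s₁ - s₀ ≠ t • (s₂ - s₀) := by
    by_contra h
    push_neg at h
    apply hnoline
    by_cases hz : ∃ s ∈ S, s - s₀ ≠ 0
    · obtain ⟨s₂, hs₂S, hd₂⟩ := hz
      refine ⟨s₀, s₂ - s₀, fun p hp => ?_⟩
      obtain ⟨t, ht⟩ := h p hp s₂ hs₂S hd₂
      exact ⟨t, by rw [← ht]; abel⟩
    · push_neg at hz
      refine ⟨s₀, 0, fun p hp => ⟨0, ?_⟩⟩
      have hps : p = s₀ := sub_eq_zero.mp (hz p hp)
      rw [hps, zero_smul, add_zero]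
  obtain ⟨s₁, hs₁S, s₂, hs₂S, hd₂ne, hP⟩ := hpair
  set d₁ := s₁ - s₀ with hd₁def
  set d₂ := s₂ - s₀ with hd₂def
  have hd₁ne : d₁ ≠ 0 := by
    intro h
    exact hP 0 (by rw [h, zero_smul])
  have hQ : ∀ w : EuclideanSpace ℝ (Fin d), w ≠ 0 → (∑ i, w i * w i) ≠ 0 := by
    intro w hw h
    apply hw
    ext i
    exact mul_self_eq_zero.mp
      ((Finset.sum_eq_zero_iff_of_nonneg (fun i _ => mul_self_nonneg (w i))).mp h i
        (Finset.mem_univ i))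
  have hQ₁ := hQ d₁ hd₁ne
  have hQ₂ := hQ d₂ hd₂ne
  set C := ((Fin d → Fin 2) × (Fin d → Fin 2)) with hC
  let e : C ≃ Fin (Fintype.card C) := Fintype.equivFin C
  set Φ : EuclideanSpace ℝ (Fin d) → C :=
    fun x => (fun j => psi (Lf d₁ j x), fun j => psi (Lf d₂ j x)) with hΦdef
  refine ⟨Fintype.card C, fun x => e (Φ x), ?_, ?_⟩
  · -- AP-free
    rintro ⟨a, v, c, hv, hc⟩
    have hΦ : ∀ n : ℕ, Φ (a + (n : ℝ) • v) = e.symm c := fun n => by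
      apply e.injective
      rw [Equiv.apply_symm_apply]; exact hc n
    by_cases h1 : ∃ j, Lf d₁ j v ≠ 0
    · obtain ⟨j, hj⟩ := h1
      obtain ⟨n, m, hnm⟩ := psi_ap (Lf d₁ j a) (Lf d₁ j v) hj
      apply hnm
      have e1 := congrArg (fun p : C => p.1 j) (hΦ n)
      have e2 := congrArg (fun p : C => p.1 j) (hΦ m)
      simp only [hΦdef, Lf_affine] at e1 e2
      rw [e1, e2]
    · by_cases h2 : ∃ j, Lf d₂ j v ≠ 0
      · obtain ⟨j, hj⟩ := h2
        obtain ⟨n, m, hnm⟩ := psi_ap (Lf d₂ j a) (Lf d₂ j v) hj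
        apply hnm
        have e1 := congrArg (fun p : C => p.2 j) (hΦ n)
        have e2 := congrArg (fun p : C => p.2 j) (hΦ m)
        simp only [hΦdef, Lf_affine] at e1 e2
        rw [e1, e2]
      · apply hv
        push_neg at h1 h2
        set t₁ := (∑ i, d₁ i * v i) / (∑ i, d₁ i * d₁ i) with ht₁
        set t₂ := (∑ i, d₂ i * v i) / (∑ i, d₂ i * d₂ i) with ht₂
        have hv1 : v = t₁ • d₁ := Lf_zero d₁ v h1
        have hv2 : v = t₂ • d₂ := Lf_zero d₂ v h2
        by_cases ht : t₁ = 0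
        · rw [hv1, ht, zero_smul]
        · exfalso
          apply hP (t₁⁻¹ * t₂)
          calc d₁ = t₁⁻¹ • (t₁ • d₁) := by rw [inv_smul_smul₀ ht]
            _ = t₁⁻¹ • (t₂ • d₂) := by rw [← hv1, ← hv2]
            _ = (t₁⁻¹ * t₂) • d₂ := by rw [smul_smul]
  · -- no almost-monochromatic homothet
    rintro ⟨c, l, hl, ⟨⟨c₀, hmono⟩, hnot⟩⟩
    apply hnot
    refine ⟨c₀, ?_⟩
    have hs₁ne : s₁ ≠ s₀ := fun h => hd₁ne (by rw [hd₁def, h, sub_self])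
    have hs₂ne : s₂ ≠ s₀ := fun h => hd₂ne (by rw [hd₂def, h, sub_self])
    have hmem : ∀ s : EuclideanSpace ℝ (Fin d), s ∈ S → s ≠ s₀ →
        c + l • s ∈ ((fun s => c + l • s) '' S) \ {c + l • s₀} := by
      intro s hsS hne
      refine ⟨⟨s, hsS, rfl⟩, ?_⟩
      simp only [Set.mem_singleton_iff]
      intro h
      exact hne (smul_right_injective (EuclideanSpace ℝ (Fin d)) (ne_of_gt hl)
        (add_left_cancel h))
    have h1 : e (Φ (c + l • s₁)) = c₀ := hmono _ (hmem s₁ hs₁S hs₁ne)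
    have h2 : e (Φ (c + l • s₂)) = c₀ := hmono _ (hmem s₂ hs₂S hs₂ne)
    have key1 : ∀ j, Lf d₁ j s₁ = Lf d₁ j s₀ := by
      intro j
      have hs : s₁ = s₀ + (1:ℝ) • d₁ := by rw [one_smul, hd₁def]; abel
      rw [hs, Lf_affine, Lf_self d₁ hQ₁, mul_zero, add_zero]
    have key2 : ∀ j, Lf d₂ j s₂ = Lf d₂ j s₀ := by
      intro j
      have hs : s₂ = s₀ + (1:ℝ) • d₂ := by rw [one_smul, hd₂def]; abel
      rw [hs, Lf_affine, Lf_self d₂ hQ₂, mul_zero, add_zero]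
    have hΦ0 : Φ (c + l • s₀) = e.symm c₀ := by
      have p1 : (Φ (c + l • s₀)).1 = (Φ (c + l • s₁)).1 := by
        funext j
        simp only [hΦdef, Lf_affine, key1 j]
      have p2 : (Φ (c + l • s₀)).2 = (Φ (c + l • s₂)).2 := by
        funext j
        simp only [hΦdef, Lf_affine, key2 j]
      have q1 : Φ (c + l • s₁) = e.symm c₀ := by
        apply e.injective; rw [h1, Equiv.apply_symm_apply]
      have q2 : Φ (c + l • s₂) = e.symm c₀ := by
        apply e.injective; rw [h2, Equiv.apply_symm_apply]
      rw [Prod.ext_iff]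
      exact ⟨by rw [p1, q1], by rw [p2, q2]⟩
    intro x hx
    obtain ⟨s, hsS, rfl⟩ := hx
    by_cases hxs : c + l • s = c + l • s₀
    · show e (Φ (c + l • s)) = c₀
      rw [hxs, hΦ0, Equiv.apply_symm_apply]
    · exact hmono _ ⟨⟨s, hsS, rfl⟩, by simpa using hxs⟩
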